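/- Over the ring of integers ℤ, the class of divisible abelian groups equals the class {D : Ext^i_ℤ(R, D) = 0 for all i ≥ 1 and all reduced abelian groups R}, and consequently the double orthogonal ^{⊥_∞}({reduced}^{⊥_∞}) of the class of reduced abelian groups is the class of all abelian groups. In particular, the class of reduced abelian groups is not of the form ^{⊥_∞}G for any class G of abelian groups. -/

import Mathlib

open CategoryTheory

universe u

noncomputable section

variable {R : Type u} [Ring R]

/-- Membership in `F ∪ {0}`. -/
def MemF0 (F : ModuleCat.{u} R → Prop) (M : ModuleCat.{u} R) : Prop :=
  F M ∨ Subsingleton M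

/-- There is a short exact sequence `0 → A → B → C → 0`. -/
def IsSES {R : Type u} [Ring R] (A B C : ModuleCat.{u} R) : Prop :=
  ∃ (f : A ⟶ B) (g : B ⟶ C),
    Function.Injective f ∧ Function.Surjective g ∧ Function.Exact f g

/-- `FDimLE F n M` : `M` has left `F`-dimension `≤ n`, i.e. there is an exact sequence
`0 → F_n → ⋯ → F_0 → M → 0` with all `F_j ∈ F ∪ {0}`. -/
def FDimLE (F : ModuleCat.{u} R → Prop) : ℕ → ModuleCat.{u} R → Prop
  | 0, M => MemF0 F M
  | n + 1, M => ∃ K F0 : ModuleCat.{u} R, MemF0 F F0 ∧ IsSES K F0 M ∧ FDimLE F n K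

/-- `M` admits a (possibly infinite) `F`-resolution `⋯ → F_1 → F_0 → M → 0`
with all terms in `F ∪ {0}`. -/
def HasFRes (F : ModuleCat.{u} R → Prop) (M : ModuleCat.{u} R) : Prop :=
  ∃ K Fo : ℕ → ModuleCat.{u} R, K 0 = M ∧
    ∀ n, MemF0 F (Fo n) ∧ IsSES (K (n + 1)) (Fo n) (K n)

/-- `IsFKernel F n K X` : there is an exact sequence
`0 → K → F_n → ⋯ → F_0 → X → 0` with all `F_i ∈ F`. -/
def IsFKernel (F : ModuleCat.{u} R → Prop) : ℕ → ModuleCat.{u} R → ModuleCat.{u} R → Prop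
  | 0, K, X => ∃ F0, F F0 ∧ IsSES K F0 X
  | n + 1, K, X => ∃ K1 F0, F F0 ∧ IsSES K1 F0 X ∧ IsFKernel F n K K1

/-- The class `F` defines a homological dimension. -/
def DefinesHomDim (F : ModuleCat.{u} R → Prop) : Prop :=
  (∀ K Fm M : ModuleCat.{u} R, F Fm → IsSES K Fm M → HasFRes F M → HasFRes F K) ∧
  (∀ (n : ℕ) (K X : ModuleCat.{u} R), FDimLE F (n + 1) X → IsFKernel F n K X → F K)

/-- `M` is a homomorphic image of a module in `F`. -/
def IsImageOfF (F : ModuleCat.{u} R → Prop) (M : ModuleCat.{u} R) : Prop :=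
  ∃ F0 : ModuleCat.{u} R, F F0 ∧ ∃ g : F0 ⟶ M, Function.Surjective g

/-- `F` is closed under finite (binary) direct sums. -/
def ClosedUnderFinSums (F : ModuleCat.{u} R → Prop) : Prop :=
  ∀ A B : ModuleCat.{u} R, F A → F B → F (ModuleCat.of R (A × B))

/-- The class of homomorphic images of modules in `F` is closed under extensions. -/
def ImagesClosedUnderExt (F : ModuleCat.{u} R → Prop) : Prop :=
  ∀ (A B C : ModuleCat.{u} R) (f : A ⟶ B) (g : B ⟶ C),
    Function.Injective f → Function.Surjective g → Function.Exact f g →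
      IsImageOfF F A → IsImageOfF F C → IsImageOfF F B

/-- `Ext^i(M, N)` vanishes. -/
def ExtZero {R : Type u} [Ring R] (i : ℕ) (M N : ModuleCat.{u} R) : Prop :=
  Subsingleton (((Ext ℤ (ModuleCat.{u} R) i).obj (Opposite.op M)).obj N)

end
/-- A divisible abelian group (`ℤ`-module). -/
def IsDivisibleGrp (D : ModuleCat.{0} ℤ) : Prop :=
  ∀ n : ℤ, n ≠ 0 → ∀ x : D, ∃ y : D, n • y = x

/-- A reduced abelian group: its only divisible subgroup is `0`. -/
def IsReducedGrp (M : ModuleCat.{0} ℤ) : Prop :=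
  ∀ S : Submodule ℤ M, (∀ n : ℤ, n ≠ 0 → ∀ x ∈ S, ∃ y ∈ S, n • y = x) → S = ⊥


/-! ### Auxiliary lemmas for `stmt15` -/

noncomputable section Stmt15Aux

open CategoryTheory

lemma Stmt15.subsingleton_of_isZero {R : Type} [Ring R] {M : ModuleCat.{0} R}
    (h : Limits.IsZero M) : Subsingleton M := by
  have hid : (𝟙 M : M ⟶ M) = 0 := h.eq_of_src _ _
  constructor
  intro a b
  have : ∀ x : M, (𝟙 M : M ⟶ M) x = (0 : M ⟶ M) x := fun x => by rw [hid]
  simpa using (this a).trans (this b).symm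

/-- Vanishing of `Ext^{j+1}(M, D)` for `D` an injective module. -/
lemma Stmt15.extZero_of_injective {R : Type} [Ring R] (D : ModuleCat.{0} R)
    (inj : Module.Injective R D) (M : ModuleCat.{0} R) (j : ℕ) :
    Subsingleton (((Ext ℤ (ModuleCat.{0} R) (j+1)).obj (Opposite.op M)).obj D) := by
  classical
  let P : ProjectiveResolution M := ProjectiveResolution.of M
  have hex : (P.complex.linearYonedaObj ℤ D).ExactAt (j + 1) := by
    rw [HomologicalComplex.exactAt_iff' _ j (j+1) (j+2) (by simp) (by simp)]
    rw [ShortComplex.moduleCat_exact_iff]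
    intro φ hφ
    simp only [HomologicalComplex.sc'] at hφ ⊢
    simp [ChainComplex.linearYonedaObj_d] at hφ ⊢
    change (P.complex.X (j+1) ⟶ D) at φ
    set d1 := P.complex.d (j+1) j with hd1
    have hsub : LinearMap.ker d1.hom ≤ LinearMap.ker φ.hom := by
      intro x hx
      have hexP := (P.exact_succ j)
      rw [ShortComplex.moduleCat_exact_iff] at hexP
      obtain ⟨y, hy⟩ := hexP x hx
      have : φ (P.complex.d (j+2) (j+1) y) = 0 := by
        have := congrArg (fun (f : P.complex.X (j+2) ⟶ D) => f y) hφ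
        exact this
      simp only [LinearMap.mem_ker]
      rw [← hy]
      exact this
    let fbar := (LinearMap.ker d1.hom).liftQ φ.hom hsub
    let e := LinearMap.quotKerEquivRange d1.hom
    let χ := fbar.comp e.symm.toLinearMap
    obtain ⟨h, hh⟩ := inj.out ((LinearMap.range d1.hom).subtype) (Submodule.injective_subtype _) χ
    refine ⟨ModuleCat.ofHom h, ModuleCat.hom_ext (LinearMap.ext fun x => ?_)⟩
    have h1 : h (d1 x) = χ ⟨d1 x, LinearMap.mem_range_self _ x⟩ :=
      hh ⟨d1 x, LinearMap.mem_range_self _ x⟩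
    have h2 : e (Submodule.Quotient.mk x) = ⟨d1 x, LinearMap.mem_range_self _ x⟩ := rfl
    have h3 : χ ⟨d1 x, LinearMap.mem_range_self _ x⟩ = fbar (Submodule.Quotient.mk x) := by
      simp only [χ, LinearMap.comp_apply]
      rw [← h2]
      simp
    have h4 : fbar (Submodule.Quotient.mk x) = φ x := rfl
    show h (d1 x) = φ x
    rw [h1, h3, h4]
  have hz : Limits.IsZero ((P.complex.linearYonedaObj ℤ D).homology (j+1)) := by
    rw [← HomologicalComplex.exactAt_iff_isZero_homology]
    exact hex
  have := Stmt15.subsingleton_of_isZero (R := ℤ) hz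
  exact Equiv.subsingleton (((forget _).mapIso (P.isoExt (j+1) D)).toEquiv)

/-- Divisible implies injective (as a `ℤ`-module). -/
lemma Stmt15.injective_of_div (D : ModuleCat.{0} ℤ)
    (h : ∀ n : ℤ, n ≠ 0 → ∀ x : D, ∃ y : D, n • y = x) :
    @Module.Injective ℤ _ (↑D) _ D.isModule := by
  letI : DivisibleBy (↑D) ℤ :=
    { div := fun a n => if hn : n = 0 then 0 else Classical.choose (h n hn a)
      div_zero := fun a => dif_pos rfl
      div_cancel := fun {n} a hn => by
        show n • (if hn : n = 0 then 0 else Classical.choose (h n hn a)) = a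
        rw [dif_neg hn]
        exact Classical.choose_spec (h n hn a) }
  have e : (AddCommGroup.toIntModule (↑D) : Module ℤ ↑D) = D.isModule :=
    ((AddCommGroup.uniqueIntModule).uniq _).trans
      ((AddCommGroup.uniqueIntModule).uniq _).symm
  have hinj : @Module.Injective ℤ _ (↑D) _ (AddCommGroup.toIntModule (↑D)) :=
    @Module.Baer.injective ℤ _ (↑D) _ (AddCommGroup.toIntModule ↑D) (Module.Baer.of_divisible (↑D))
  exact e ▸ hinj

/-- The cyclic group `ℤ/nℤ` as an object of `ModuleCat ℤ`. -/
abbrev Stmt15.Kmod (n : ℤ) : ModuleCat.{0} ℤ :=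
  ModuleCat.of ℤ (ℤ ⧸ Submodule.span ℤ {n})

def Stmt15.QX : ℕ → ModuleCat.{0} ℤ
  | 0 => ModuleCat.of ℤ ℤ
  | 1 => ModuleCat.of ℤ ℤ
  | _ + 2 => ModuleCat.of ℤ PUnit

def Stmt15.Qd (n : ℤ) : ∀ i : ℕ, Stmt15.QX (i+1) ⟶ Stmt15.QX i
  | 0 => ModuleCat.ofHom (LinearMap.toSpanSingleton ℤ ℤ n)
  | _ + 1 => 0

/-- The two-term complex `0 → ℤ --n--> ℤ → 0`. -/
def Stmt15.Qc (n : ℤ) : ChainComplex (ModuleCat.{0} ℤ) ℕ :=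
  ChainComplex.of Stmt15.QX (Stmt15.Qd n) (fun i => by
    cases i <;> exact Limits.zero_comp)

lemma Stmt15.Qc_d10 (n : ℤ) : (Stmt15.Qc n).d 1 0 = Stmt15.Qd n 0 :=
  ChainComplex.of_d (α := ℕ) Stmt15.QX (Stmt15.Qd n) 0

def Stmt15.Qπ0 (n : ℤ) : Stmt15.QX 0 ⟶ Stmt15.Kmod n :=
  ModuleCat.ofHom (Submodule.span ℤ {n}).mkQ

lemma Stmt15.Qπ0_comp (n : ℤ) : (Stmt15.Qc n).d 1 0 ≫ Stmt15.Qπ0 n = 0 := by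
  rw [Stmt15.Qc_d10]
  refine ModuleCat.hom_ext (LinearMap.ext fun (x : ℤ) => ?_)
  show (Submodule.span ℤ {n}).mkQ (x • n) = 0
  rw [Submodule.mkQ_apply, Submodule.Quotient.mk_eq_zero]
  exact Submodule.smul_mem _ x (Submodule.mem_span_singleton_self n)

instance Stmt15.projQX (i : ℕ) : CategoryTheory.Projective (Stmt15.QX i) := by
  match i with
  | 0 => exact ModuleCat.projective_of_free (ι := Unit) (Module.Basis.singleton Unit ℤ)
  | 1 => exact ModuleCat.projective_of_free (ι := Unit) (Module.Basis.singleton Unit ℤ)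
  | (i+2) =>
      refine (IsProjective.iff_projective (R := ℤ) PUnit).mp ?_
      infer_instance

instance (n : ℤ) (i : ℕ) : CategoryTheory.Projective ((Stmt15.Qc n).X i) :=
  Stmt15.projQX i

def Stmt15.Qπ (n : ℤ) :
    Stmt15.Qc n ⟶ (ChainComplex.single₀ (ModuleCat.{0} ℤ)).obj (Stmt15.Kmod n) :=
  (ChainComplex.toSingle₀Equiv _ _).symm ⟨Stmt15.Qπ0 n, Stmt15.Qπ0_comp n⟩

lemma Stmt15.Qc_exactAt (n : ℤ) (hn : n ≠ 0) (i : ℕ) : (Stmt15.Qc n).ExactAt (i + 1) := by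
  rw [HomologicalComplex.exactAt_iff' _ (i+2) (i+1) i (by simp) (by simp)]
  rw [ShortComplex.moduleCat_exact_iff]
  match i with
  | 0 =>
      intro (x : ℤ) hx
      have hx' : x • n = 0 := by
        have : (Stmt15.Qd n 0) x = 0 := by rw [← Stmt15.Qc_d10]; exact hx
        exact this
      have hx0 : x = 0 := by
        rcases (by simpa [smul_eq_mul] using hx' : x = 0 ∨ n = 0) with h | h
        · exact h
        · exact absurd h hn
      exact ⟨0, by simp [hx0, map_zero]; rfl⟩
  | (i+1) =>
      intro x hx
      refine ⟨0, ?_⟩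
      rw [map_zero]
      exact (Subsingleton.elim (α := PUnit) _ _)

/-- The explicit projective resolution `0 → ℤ → ℤ → ℤ/nℤ → 0`. -/
def Stmt15.Qres (n : ℤ) (hn : n ≠ 0) : ProjectiveResolution (Stmt15.Kmod n) where
  complex := Stmt15.Qc n
  π := Stmt15.Qπ n
  quasiIso := ⟨fun i => by
    cases i with
    | zero =>
      rw [ChainComplex.quasiIsoAt₀_iff, ShortComplex.quasiIso_iff_of_zeros']
      · refine ⟨?_, ?_⟩
        · rw [ShortComplex.moduleCat_exact_iff]
          intro (x : ℤ) hx
          have hx' : (Submodule.Quotient.mk x : ℤ ⧸ Submodule.span ℤ {n}) = 0 := hx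
          obtain ⟨c, hc⟩ := Submodule.mem_span_singleton.mp
            ((Submodule.Quotient.mk_eq_zero _).mp hx')
          refine ⟨c, ?_⟩
          show (Stmt15.Qc n).d 1 0 c = x
          rw [Stmt15.Qc_d10]
          exact hc
        · have : Function.Surjective (Stmt15.Qπ0 n) := Submodule.mkQ_surjective _
          exact (ModuleCat.epi_iff_surjective _).mpr this
      all_goals rfl
    | succ i =>
      rw [quasiIsoAt_iff_exactAt']
      · exact Stmt15.Qc_exactAt n hn i
      · apply ChainComplex.exactAt_succ_single_obj⟩

/-- If `Ext^1(ℤ/nℤ, D)` vanishes then `D` is divisible by `n`. -/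
lemma Stmt15.divisible_of_ext (n : ℤ) (hn : n ≠ 0) (D : ModuleCat.{0} ℤ)
    (h : Subsingleton (((Ext ℤ (ModuleCat.{0} ℤ) 1).obj (Opposite.op (Stmt15.Kmod n))).obj D)) :
    ∀ x : D, ∃ y : D, n • y = x := by
  intro x
  let P := Stmt15.Qres n hn
  haveI hsub2 : Subsingleton ((Stmt15.Qc n).X 2 ⟶ D) := by
    constructor
    intro f g
    refine ModuleCat.hom_ext (LinearMap.ext fun z => ?_)
    have hz : z = 0 := Subsingleton.elim (α := PUnit) _ _
    rw [hz, map_zero, map_zero]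
  haveI hhom : Subsingleton ((P.complex.linearYonedaObj ℤ D).homology 1) :=
    Equiv.subsingleton (((forget _).mapIso (P.isoExt 1 D)).toEquiv.symm)
  have hz : Limits.IsZero ((P.complex.linearYonedaObj ℤ D).homology 1) :=
    ModuleCat.isZero_of_subsingleton _
  have hex := (HomologicalComplex.exactAt_iff_isZero_homology _ _).mpr hz
  rw [HomologicalComplex.exactAt_iff' _ 0 1 2 (by simp) (by simp)] at hex
  rw [ShortComplex.moduleCat_exact_iff] at hex
  simp only [HomologicalComplex.sc'] at hex
  simp [ChainComplex.linearYonedaObj_d] at hex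
  let φ : P.complex.X 1 ⟶ D := ModuleCat.ofHom (@LinearMap.toSpanSingleton ℤ (↑D) _ _ D.isModule x)
  have hφ : P.complex.d 2 1 ≫ φ = 0 := @Subsingleton.elim _ hsub2 _ _
  obtain ⟨ψ, hψ⟩ := hex φ hφ
  change P.complex.X 0 ⟶ D at ψ
  refine ⟨ψ (1 : ℤ), ?_⟩
  have h1 : φ (1 : ℤ) = ψ ((Stmt15.Qc n).d 1 0 (1 : ℤ)) := by rw [← hψ]; rfl
  have h2 : φ (1 : ℤ) = x := @LinearMap.toSpanSingleton_apply_one ℤ (↑D) _ _ D.isModule x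
  have h3 : (Stmt15.Qc n).d 1 0 (1 : ℤ) = n := by
    rw [Stmt15.Qc_d10]
    exact LinearMap.toSpanSingleton_apply_one ℤ ℤ n
  have h4 : ψ (n : ℤ) = x := by rw [← h2, h1, h3]
  have h7 : ψ ((n : ℤ) • (1 : ℤ)) = n • ψ (1 : ℤ) := map_zsmul ψ.hom n (1 : ℤ)
  have h8 : (n : ℤ) • (1 : ℤ) = n := by simp
  rw [h8] at h7
  rw [← h7]
  exact h4

/-- `ℤ/nℤ` is reduced for `n ≠ 0`. -/
lemma Stmt15.kmod_reduced (n : ℤ) (hn : n ≠ 0) : IsReducedGrp (Stmt15.Kmod n) := by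
  intro S hS
  rw [eq_bot_iff]
  intro x hx
  obtain ⟨y, hyS, hny⟩ := hS n hn x hx
  have hy0 : n • y = 0 := by
    obtain ⟨a, rfl⟩ := Submodule.Quotient.mk_surjective _ y
    rw [← Int.cast_smul_eq_zsmul ℤ, Int.cast_id, ← Submodule.Quotient.mk_smul,
      Submodule.Quotient.mk_eq_zero]
    exact Submodule.mem_span_singleton.mpr ⟨a, by rw [smul_eq_mul, smul_eq_mul, mul_comm]⟩
  simp only [Submodule.mem_bot]
  rw [← hny, hy0]

lemma Stmt15.q_div : ∀ n : ℤ, n ≠ 0 → ∀ x : (ModuleCat.of ℤ ℚ), ∃ y, n • y = x := by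
  intro n hn x
  let x' : ℚ := x
  have hx : ∃ y : ℚ, n • y = x' := by
    refine ⟨(n : ℚ)⁻¹ * x', ?_⟩
    rw [← Int.cast_smul_eq_zsmul ℚ, smul_eq_mul, ← mul_assoc,
      mul_inv_cancel₀ (by exact_mod_cast hn), one_mul]
  exact hx

lemma Stmt15.q_not_reduced : ¬ IsReducedGrp (ModuleCat.of ℤ ℚ) := by
  intro h
  have ht := h ⊤ (fun n hn x _ =>
    ⟨Classical.choose (Stmt15.q_div n hn x), Submodule.mem_top,
      Classical.choose_spec (Stmt15.q_div n hn x)⟩)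
  have h1 : (1 : ℚ) ∈ (⊤ : Submodule ℤ (ModuleCat.of ℤ ℚ)) := Submodule.mem_top
  rw [ht] at h1
  exact one_ne_zero ((Submodule.mem_bot _).mp h1)

end Stmt15Aux

theorem stmt15 :
    (∀ D : ModuleCat.{0} ℤ, IsDivisibleGrp D ↔
      ∀ i, 1 ≤ i → ∀ Rm : ModuleCat.{0} ℤ, IsReducedGrp Rm → ExtZero i Rm D) ∧
    (∀ M C : ModuleCat.{0} ℤ,
      (∀ i, 1 ≤ i → ∀ Rm : ModuleCat.{0} ℤ, IsReducedGrp Rm → ExtZero i Rm C) →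
      ∀ i, 1 ≤ i → ExtZero i M C) ∧
    ¬ ∃ G : ModuleCat.{0} ℤ → Prop, ∀ M : ModuleCat.{0} ℤ,
      IsReducedGrp M ↔ (∀ i, 1 ≤ i → ∀ g, G g → ExtZero i M g) := by
  have part1 : ∀ D : ModuleCat.{0} ℤ, IsDivisibleGrp D ↔
      ∀ i, 1 ≤ i → ∀ Rm : ModuleCat.{0} ℤ, IsReducedGrp Rm → ExtZero i Rm D := by
    intro D
    constructor
    · intro hdiv i hi Rm hRm
      match i, hi with
      | (j+1), _ =>
        exact Stmt15.extZero_of_injective D (Stmt15.injective_of_div D hdiv) Rm j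
    · intro hext n hn x
      exact Stmt15.divisible_of_ext n hn D
        (hext 1 le_rfl (Stmt15.Kmod n) (Stmt15.kmod_reduced n hn)) x
  refine ⟨part1, ?_, ?_⟩
  · intro M C hC i hi
    match i, hi with
    | (j+1), _ =>
      exact Stmt15.extZero_of_injective C
        (Stmt15.injective_of_div C ((part1 C).mpr hC)) M j
  · rintro ⟨G, hG⟩
    apply Stmt15.q_not_reduced
    rw [hG]
    intro i hi g hg
    match i, hi with
    | (j+1), _ =>
      have hgdiv : IsDivisibleGrp g := by
        apply (part1 g).mpr
        intro i' hi' Rm hRm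
        exact (hG Rm).mp hRm i' hi' g hg
      exact Stmt15.extZero_of_injective g (Stmt15.injective_of_div g hgdiv)
        (ModuleCat.of ℤ ℚ) j
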